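/- In PGL(3,ℂ) the following identities hold: [U₁] = [Q]², [U₂] = [R]·[Q]²·[R], and [E₁] = [P]²·([R]·[Q]²)²·[P]⁻². -/

import Mathlib

noncomputable section

open Matrix Complex

/-- GL(3,ℂ): the group of invertible 3×3 complex matrices. -/
abbrev GL3 : Type := (Matrix (Fin 3) (Fin 3) ℂ)ˣ

/-- PGL(3,ℂ): the quotient of GL(3,ℂ) by its center. -/
abbrev PGL3 : Type := GL3 ⧸ Subgroup.center GL3

/-- The projection GL(3,ℂ) → PGL(3,ℂ). -/
def pgl : GL3 →* PGL3 := QuotientGroup.mk' (Subgroup.center GL3)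

/-- The class [M] ∈ PGL(3,ℂ) of an (invertible) matrix M. -/
noncomputable def cls (M : Matrix (Fin 3) (Fin 3) ℂ) : PGL3 := by
  classical exact if h : IsUnit M then pgl h.unit else 1

/-- The Hermitian matrix of signature (2,1) defining the Siegel model. -/
def Hform : Matrix (Fin 3) (Fin 3) ℂ := !![0,0,1; 0,1,0; 1,0,0]

lemma Hform_mul_Hform : Hform * Hform = 1 := by
  rw [Hform, Matrix.mul_fin_three, Matrix.one_fin_three]
  norm_num

/-- U(2,1,O): the subgroup of GL(3,ℂ) of matrices with entries in O
satisfying Mᴴ H M = H, for O a subring of ℂ closed under conjugation. -/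
def U21 (O : Subring ℂ) (hO : ∀ z ∈ O, (starRingEnd ℂ) z ∈ O) : Subgroup GL3 where
  carrier := {M : GL3 | (∀ i j, (M : Matrix (Fin 3) (Fin 3) ℂ) i j ∈ O) ∧
      (M : Matrix (Fin 3) (Fin 3) ℂ)ᴴ * Hform * (M : Matrix (Fin 3) (Fin 3) ℂ) = Hform}
  one_mem' := by
    constructor
    · intro i j
      by_cases h : i = j <;> simp [Matrix.one_apply, h, Subring.one_mem, Subring.zero_mem]
    · simp
  mul_mem' := by
    rintro a b ⟨ha1, ha2⟩ ⟨hb1, hb2⟩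
    constructor
    · intro i j
      rw [Units.val_mul, Matrix.mul_apply]
      exact Subring.sum_mem _ fun k _ => Subring.mul_mem _ (ha1 i k) (hb1 k j)
    · rw [Units.val_mul, Matrix.conjTranspose_mul]
      calc (↑b)ᴴ * (↑a)ᴴ * Hform * ((↑a : Matrix (Fin 3) (Fin 3) ℂ) * ↑b)
          = (↑b)ᴴ * ((↑a)ᴴ * Hform * ↑a) * ↑b := by simp only [mul_assoc]
        _ = (↑b)ᴴ * Hform * ↑b := by rw [ha2]
        _ = Hform := hb2
  inv_mem' := by
    rintro a ⟨ha1, ha2⟩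
    have hBA : (Hform * (a.val)ᴴ * Hform) * a.val = 1 := by
      calc (Hform * (a.val)ᴴ * Hform) * a.val
          = Hform * ((a.val)ᴴ * Hform * a.val) := by simp only [mul_assoc]
        _ = Hform * Hform := by rw [ha2]
        _ = 1 := Hform_mul_Hform
    have hInv : (a⁻¹).val = Hform * (a.val)ᴴ * Hform :=
      Units.inv_eq_of_mul_eq_one_left hBA
    have hab : a.val * (a⁻¹).val = 1 := a.mul_inv
    constructor
    · intro i j
      rw [hInv]
      simp only [Matrix.mul_apply, Fin.sum_univ_three]
      fin_cases i <;> fin_cases j <;>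
        simp [Hform, Matrix.conjTranspose_apply, Matrix.vecHead, Matrix.vecTail, Function.comp] <;>
        exact hO _ (ha1 _ _)
    · calc ((a⁻¹).val)ᴴ * Hform * (a⁻¹).val
          = ((a⁻¹).val)ᴴ * ((a.val)ᴴ * Hform * a.val) * (a⁻¹).val := by rw [ha2]
        _ = (a.val * (a⁻¹).val)ᴴ * Hform * (a.val * (a⁻¹).val) := by
            rw [Matrix.conjTranspose_mul]; simp only [mul_assoc]
        _ = Hform := by rw [hab]; simp

/-- PU(2,1,O): the image of U(2,1,O) in PGL(3,ℂ). -/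
def PU21 (O : Subring ℂ) (hO : ∀ z ∈ O, (starRingEnd ℂ) z ∈ O) : Subgroup PGL3 :=
  (U21 O hO).map pgl

lemma conjClosed (s : Set ℂ) (h : ∀ z ∈ s, (starRingEnd ℂ) z ∈ Subring.closure s) :
    ∀ z ∈ Subring.closure s, (starRingEnd ℂ) z ∈ Subring.closure s := by
  intro z hz
  have hle : Subring.closure s ≤ (Subring.closure s).comap (starRingEnd ℂ) :=
    Subring.closure_le.mpr fun x hx => Subring.mem_comap.mpr (h x hx)
  exact Subring.mem_comap.mp (hle hz)


-- test ring pieces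
section rings
open Matrix Complex

/-- ω = (−1+i√3)/2, a primitive cube root of unity. -/
def omega3 : ℂ := (-1 + Complex.I * (Real.sqrt 3 : ℝ)) / 2

/-- O₃ = ℤ[ω], the Eisenstein integers. -/
def O3 : Subring ℂ := Subring.closure {omega3}

lemma conj_omega3 : (starRingEnd ℂ) omega3 = -1 - omega3 := by
  rw [omega3]
  rw [map_div₀, map_add, _root_.map_mul, Complex.conj_I, Complex.conj_ofReal]
  rw [map_neg, _root_.map_one, _root_.map_ofNat]
  ring

lemma hO3 : ∀ z ∈ O3, (starRingEnd ℂ) z ∈ O3 := by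
  apply conjClosed
  intro z hz
  rw [Set.mem_singleton_iff] at hz
  subst hz
  rw [conj_omega3]
  exact sub_mem (neg_mem (Subring.one_mem _)) (Subring.subset_closure rfl)

/-- O₁ = ℤ[i], the Gaussian integers. -/
def O1 : Subring ℂ := Subring.closure {Complex.I}

lemma hO1 : ∀ z ∈ O1, (starRingEnd ℂ) z ∈ O1 := by
  apply conjClosed
  intro z hz
  rw [Set.mem_singleton_iff] at hz
  subst hz
  rw [Complex.conj_I]
  exact neg_mem (Subring.subset_closure rfl)

/-- τ = (1+i√7)/2. -/
def tau7 : ℂ := (1 + Complex.I * (Real.sqrt 7 : ℝ)) / 2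

/-- O₇ = ℤ[(1+i√7)/2], the ring of integers of ℚ(i√7). -/
def O7 : Subring ℂ := Subring.closure {tau7}

lemma conj_tau7 : (starRingEnd ℂ) tau7 = 1 - tau7 := by
  rw [tau7]
  rw [map_div₀, map_add, _root_.map_mul, Complex.conj_I, Complex.conj_ofReal]
  rw [_root_.map_one, _root_.map_ofNat]
  ring

lemma hO7 : ∀ z ∈ O7, (starRingEnd ℂ) z ∈ O7 := by
  apply conjClosed
  intro z hz
  rw [Set.mem_singleton_iff] at hz
  subst hz
  rw [conj_tau7]
  exact sub_mem (Subring.one_mem _) (Subring.subset_closure rfl)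

end rings

section matrices
open Matrix Complex

/-- The Cayley transform J. -/
def Jmat : Matrix (Fin 3) (Fin 3) ℂ := !![1,1,0; 0,1,-1; 1,1,-1]

-- d = 3 ------------------------------------------------------------------
def E1d3 : Matrix (Fin 3) (Fin 3) ℂ :=
  !![omega3^2, omega3^2 - 1, omega3 + 2;
     Complex.I * (Real.sqrt 3 : ℝ), 1 + Complex.I * (Real.sqrt 3 : ℝ), omega3^2 - 1;
     Complex.I * (Real.sqrt 3 : ℝ), Complex.I * (Real.sqrt 3 : ℝ), omega3^2]

def U1d3 : Matrix (Fin 3) (Fin 3) ℂ :=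
  !![1, 0, Complex.I * (Real.sqrt 3 : ℝ); 0, 1, 0; 0, 0, 1]

def U2d3 : Matrix (Fin 3) (Fin 3) ℂ :=
  !![1, 0, 0; 0, 1, 0; Complex.I * (Real.sqrt 3 : ℝ), 0, 1]

def I1d3 : Matrix (Fin 3) (Fin 3) ℂ := Jmat⁻¹ * !![-1,0,0; 0,1,0; 0,0,-1] * Jmat

def I2d3 : Matrix (Fin 3) (Fin 3) ℂ := Jmat⁻¹ * !![1,0,0; 0,-1,0; 0,0,-1] * Jmat

/-- The Falbel–Parker generators of PU(2,1,O₃). -/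
def Pd3 : Matrix (Fin 3) (Fin 3) ℂ := !![1, 1, omega3; 0, omega3, -omega3; 0, 0, 1]

def Qd3 : Matrix (Fin 3) (Fin 3) ℂ := !![1, 1, omega3; 0, -1, 1; 0, 0, 1]

def Rd3 : Matrix (Fin 3) (Fin 3) ℂ := !![0, 0, 1; 0, -1, 0; 1, 0, 0]

/-- The hybrid H(3). -/
def H3 : Subgroup PGL3 :=
  Subgroup.closure {cls E1d3, cls U1d3, cls U2d3, cls I1d3, cls I2d3}

/-- The hybrid H̃(3). -/
def Ht3 : Subgroup PGL3 := Subgroup.closure {cls E1d3, cls U1d3, cls U2d3}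

/-- The hybrid H'(3). -/
def H'3 : Subgroup PGL3 :=
  Subgroup.closure {cls (Pd3^2 * (Rd3 * Qd3^2) * (Pd3^2)⁻¹), cls (Qd3^2), cls (Rd3 * Qd3^2 * Rd3)}

/-- The Eisenstein–Picard modular group Γ(3) = PU(2,1,O₃). -/
def Gamma3 : Subgroup PGL3 := PU21 O3 hO3

-- d = 1 ------------------------------------------------------------------
def E1d1 : Matrix (Fin 3) (Fin 3) ℂ :=
  !![Complex.I, -1 + Complex.I, 1 - Complex.I;
     -2 * Complex.I, 1 - 2 * Complex.I, -1 + Complex.I;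
     -2 * Complex.I, -2 * Complex.I, Complex.I]

def U1d1 : Matrix (Fin 3) (Fin 3) ℂ := !![1, 0, Complex.I; 0, 1, 0; 0, 0, 1]

def E2d1 : Matrix (Fin 3) (Fin 3) ℂ :=
  !![Complex.I, 2 * Complex.I, -2 * Complex.I;
     1 - Complex.I, 1 - 2 * Complex.I, 2 * Complex.I;
     1 - Complex.I, 1 - Complex.I, Complex.I]

def U2d1 : Matrix (Fin 3) (Fin 3) ℂ := !![1, 0, 0; 0, 1, 0; Complex.I, 0, 1]

/-- The Falbel–Francsics–Parker generators of PU(2,1,O₁). -/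
def I0d1 : Matrix (Fin 3) (Fin 3) ℂ := !![0, 0, 1; 0, -1, 0; 1, 0, 0]

def Qd1 : Matrix (Fin 3) (Fin 3) ℂ :=
  !![1, 1 - Complex.I, -1; 0, -1, 1 + Complex.I; 0, 0, 1]

def Td1 : Matrix (Fin 3) (Fin 3) ℂ := !![1, 0, Complex.I; 0, 1, 0; 0, 0, 1]

def R1d1 : Matrix (Fin 3) (Fin 3) ℂ := Jmat⁻¹ * !![Complex.I,0,0; 0,1,0; 0,0,1] * Jmat

def R2d1 : Matrix (Fin 3) (Fin 3) ℂ := Jmat⁻¹ * !![1,0,0; 0,Complex.I,0; 0,0,1] * Jmat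

/-- The hybrid H(1). -/
def H1 : Subgroup PGL3 := Subgroup.closure {cls E1d1, cls U1d1, cls E2d1, cls U2d1}

/-- The hybrid H'(1). -/
def H'1 : Subgroup PGL3 := Subgroup.closure {cls R1d1, cls R2d1, cls U1d1, cls U2d1}

/-- The Gauss–Picard modular group Γ(1) = PU(2,1,O₁). -/
def Gamma1 : Subgroup PGL3 := PU21 O1 hO1

-- d = 7 ------------------------------------------------------------------
def U1d7 : Matrix (Fin 3) (Fin 3) ℂ :=
  !![1, 0, Complex.I * (Real.sqrt 7 : ℝ); 0, 1, 0; 0, 0, 1]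

def U2d7 : Matrix (Fin 3) (Fin 3) ℂ :=
  !![1, 0, 0; 0, 1, 0; Complex.I * (Real.sqrt 7 : ℝ), 0, 1]

def A1d7 : Matrix (Fin 3) (Fin 3) ℂ :=
  !![-(1/2) + Complex.I * (Real.sqrt 7 : ℝ) / 2, -(3/2) + Complex.I * (Real.sqrt 7 : ℝ) / 2,
       1/2 - Complex.I * (Real.sqrt 7 : ℝ) / 2;
     1, 2, -(3/2) + Complex.I * (Real.sqrt 7 : ℝ) / 2;
     1, 1, -(1/2) + Complex.I * (Real.sqrt 7 : ℝ) / 2]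

def B1d7 : Matrix (Fin 3) (Fin 3) ℂ := !![1, 0, 0; -2, -1, 0; -2, -2, 1]

def A2d7 : Matrix (Fin 3) (Fin 3) ℂ :=
  !![-(1/2) + Complex.I * (Real.sqrt 7 : ℝ) / 2, -1, 1;
     3/2 - Complex.I * (Real.sqrt 7 : ℝ) / 2, 2, -1;
     1/2 - Complex.I * (Real.sqrt 7 : ℝ) / 2, 3/2 - Complex.I * (Real.sqrt 7 : ℝ) / 2,
       -(1/2) + Complex.I * (Real.sqrt 7 : ℝ) / 2]

def B2d7 : Matrix (Fin 3) (Fin 3) ℂ := !![1, 2, -2; 0, -1, 2; 0, 0, 1]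

/-- The Mark–Paupert generators of PU(2,1,O₇). -/
def T1d7 : Matrix (Fin 3) (Fin 3) ℂ :=
  !![1, -1, -(1/2) + Complex.I * (Real.sqrt 7 : ℝ) / 2; 0, 1, 1; 0, 0, 1]

def Rd7 : Matrix (Fin 3) (Fin 3) ℂ := !![1, 0, 0; 0, -1, 0; 0, 0, 1]

def Id7 : Matrix (Fin 3) (Fin 3) ℂ := !![0, 0, 1; 0, -1, 0; 1, 0, 0]

/-- The hybrid H(7). -/
def H7 : Subgroup PGL3 :=
  Subgroup.closure {cls U1d7, cls U2d7, cls A1d7, cls A2d7, cls B1d7, cls B2d7}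

/-- The Picard modular group Γ(7) = PU(2,1,O₇). -/
def Gamma7 : Subgroup PGL3 := PU21 O7 hO7

end matrices

section presented
/-- The relators c², a⁶, aca⁻¹c⁻¹, (ab)³, (cab)³, b² in the free group on a,b,c
(a = of 0, b = of 1, c = of 2). -/
def relsG : Set (FreeGroup (Fin 3)) :=
  {(FreeGroup.of 2)^2, (FreeGroup.of 0)^6,
   FreeGroup.of 0 * FreeGroup.of 2 * (FreeGroup.of 0)⁻¹ * (FreeGroup.of 2)⁻¹,
   (FreeGroup.of 0 * FreeGroup.of 1)^3,
   (FreeGroup.of 2 * FreeGroup.of 0 * FreeGroup.of 1)^3,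
   (FreeGroup.of 1)^2}

/-- The presented group G = ⟨a,b,c | c², a⁶, [a,c], (ab)³, (cab)³, b²⟩. -/
abbrev Gpres := PresentedGroup relsG
end presented


/-- [U₁] = [Q]², [U₂] = [R][Q]²[R], [E₁] = [P]²([R][Q]²)²[P]⁻². -/

-- Auxiliary lemmas for stmt2 -------------------------------------------------

lemma aux_hs3 : ((Real.sqrt 3:ℝ):ℂ)^2 = 3 := by
  norm_cast; rw [Real.sq_sqrt] <;> norm_num

lemma aux_hw3 : omega3^2 + omega3 + 1 = 0 := by
  rw [omega3]
  linear_combination ((((Real.sqrt 3:ℝ):ℂ)^2)/4) * Complex.I_sq + (-(1:ℂ)/4) * aux_hs3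

lemma aux_his3 : Complex.I * ((Real.sqrt 3:ℝ):ℂ) = 2*omega3 + 1 := by rw [omega3]; ring

lemma aux_m1 : Qd3 * Qd3 = U1d3 := by
  have hw := aux_hw3; have his := aux_his3
  ext i j
  fin_cases i <;> fin_cases j <;>
    simp [Qd3, U1d3, Matrix.mul_apply, Fin.sum_univ_three, Matrix.vecHead, Matrix.vecTail] <;>
    first
    | linear_combination ((-1:ℂ))*hw
    | linear_combination ((-1:ℂ)+(1:ℂ)*omega3^2)*hw
    | linear_combination ((1:ℂ)+(-3:ℂ)*omega3+(-1:ℂ)*omega3^2)*hw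
    | linear_combination ((1:ℂ)+(2:ℂ)*omega3)*hw + ((1:ℂ))*his
    | linear_combination ((1:ℂ)+(2:ℂ)*omega3)*hw + ((1:ℂ)+(1:ℂ)*omega3+(1:ℂ)*omega3^2)*his
    | linear_combination ((-1:ℂ)+(2:ℂ)*omega3+(4:ℂ)*omega3^2)*hw + ((-1:ℂ)*omega3^2)*his
    | linear_combination ((1:ℂ))*his
    | linear_combination ((-1:ℂ))*his
    | linear_combination ((-2:ℂ)+(-2:ℂ)*omega3)*hw + ((-1:ℂ)*omega3^2)*his
    | ring1

lemma aux_m2 : Rd3 * (Qd3 * Qd3) * Rd3 = U2d3 := by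
  have hw := aux_hw3; have his := aux_his3
  ext i j
  fin_cases i <;> fin_cases j <;>
    simp [Qd3, U2d3, Rd3, Matrix.mul_apply, Fin.sum_univ_three, Matrix.vecHead, Matrix.vecTail] <;>
    first
    | linear_combination ((-1:ℂ))*hw
    | linear_combination ((-1:ℂ)+(1:ℂ)*omega3^2)*hw
    | linear_combination ((1:ℂ)+(-3:ℂ)*omega3+(-1:ℂ)*omega3^2)*hw
    | linear_combination ((1:ℂ)+(2:ℂ)*omega3)*hw + ((1:ℂ))*his
    | linear_combination ((1:ℂ)+(2:ℂ)*omega3)*hw + ((1:ℂ)+(1:ℂ)*omega3+(1:ℂ)*omega3^2)*his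
    | linear_combination ((-1:ℂ)+(2:ℂ)*omega3+(4:ℂ)*omega3^2)*hw + ((-1:ℂ)*omega3^2)*his
    | linear_combination ((1:ℂ))*his
    | linear_combination ((-1:ℂ))*his
    | linear_combination ((-2:ℂ)+(-2:ℂ)*omega3)*hw + ((-1:ℂ)*omega3^2)*his
    | ring1

set_option maxHeartbeats 1000000 in
lemma aux_m3 : E1d3 * (Pd3 * Pd3) =
    (Pd3 * Pd3) * (Rd3 * (Qd3 * Qd3) * (Rd3 * (Qd3 * Qd3))) := by
  have hw := aux_hw3; have his := aux_his3
  ext i j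
  fin_cases i <;> fin_cases j <;>
    simp [E1d3, Pd3, Qd3, Rd3, Matrix.mul_apply, Fin.sum_univ_three, Matrix.vecHead, Matrix.vecTail] <;>
    first
    | linear_combination ((-1:ℂ))*hw
    | linear_combination ((-1:ℂ)+(1:ℂ)*omega3^2)*hw
    | linear_combination ((1:ℂ)+(-3:ℂ)*omega3+(-1:ℂ)*omega3^2)*hw
    | linear_combination ((1:ℂ)+(2:ℂ)*omega3)*hw + ((1:ℂ))*his
    | linear_combination ((1:ℂ)+(2:ℂ)*omega3)*hw + ((1:ℂ)+(1:ℂ)*omega3+(1:ℂ)*omega3^2)*his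
    | linear_combination ((-1:ℂ)+(2:ℂ)*omega3+(4:ℂ)*omega3^2)*hw + ((-1:ℂ)*omega3^2)*his
    | linear_combination ((1:ℂ))*his
    | linear_combination ((-1:ℂ))*his
    | linear_combination ((-2:ℂ)+(-2:ℂ)*omega3)*hw + ((-1:ℂ)*omega3^2)*his
    | ring1

lemma aux_cls_eq {M : Matrix (Fin 3) (Fin 3) ℂ} (h : IsUnit M) : cls M = pgl h.unit := by
  unfold cls
  rw [dif_pos h]

lemma aux_cls_mul {M N : Matrix (Fin 3) (Fin 3) ℂ} (hM : IsUnit M) (hN : IsUnit N) :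
    cls (M * N) = cls M * cls N := by
  rw [aux_cls_eq (hM.mul hN), aux_cls_eq hM, aux_cls_eq hN, ← _root_.map_mul]
  congr 1
  exact Units.ext (by simp)

lemma aux_hQ : IsUnit Qd3 := by
  rw [Matrix.isUnit_iff_isUnit_det]
  have : Qd3.det = -1 := by
    simp [Qd3, Matrix.det_fin_three, Matrix.vecHead, Matrix.vecTail]
  rw [this]
  exact isUnit_one.neg

lemma aux_hR : IsUnit Rd3 := by
  rw [Matrix.isUnit_iff_isUnit_det]
  have : Rd3.det = 1 := by
    simp [Rd3, Matrix.det_fin_three, Matrix.vecHead, Matrix.vecTail]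
  rw [this]
  exact isUnit_one

lemma aux_hP : IsUnit Pd3 := by
  rw [Matrix.isUnit_iff_isUnit_det]
  have : Pd3.det = omega3 := by
    simp [Pd3, Matrix.det_fin_three, Matrix.vecHead, Matrix.vecTail]
  rw [this]
  exact IsUnit.of_mul_eq_one (a := omega3) (-(omega3+1)) (by linear_combination (-1:ℂ)*aux_hw3)

lemma aux_hE : IsUnit E1d3 := by
  have hX : IsUnit (E1d3 * (Pd3 * Pd3)) := by
    rw [aux_m3]
    exact (aux_hP.mul aux_hP).mul
      ((aux_hR.mul (aux_hQ.mul aux_hQ)).mul (aux_hR.mul (aux_hQ.mul aux_hQ)))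
  rw [Matrix.isUnit_iff_isUnit_det] at hX ⊢
  rw [Matrix.det_mul] at hX
  exact isUnit_of_mul_isUnit_left hX

theorem stmt2 :
    cls U1d3 = (cls Qd3)^2 ∧
    cls U2d3 = cls Rd3 * (cls Qd3)^2 * cls Rd3 ∧
    cls E1d3 = (cls Pd3)^2 * (cls Rd3 * (cls Qd3)^2)^2 * ((cls Pd3)^2)⁻¹ := by
  have hQ := aux_hQ; have hR := aux_hR; have hP := aux_hP; have hE := aux_hE
  have hQQ : IsUnit (Qd3 * Qd3) := hQ.mul hQ
  have hPP : IsUnit (Pd3 * Pd3) := hP.mul hP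
  have hRQQ : IsUnit (Rd3 * (Qd3 * Qd3)) := hR.mul hQQ
  have c1 : (cls Qd3)^2 = cls (Qd3 * Qd3) := by rw [sq, ← aux_cls_mul hQ hQ]
  have c2 : (cls Pd3)^2 = cls (Pd3 * Pd3) := by rw [sq, ← aux_cls_mul hP hP]
  have c3 : cls Rd3 * (cls Qd3)^2 = cls (Rd3 * (Qd3 * Qd3)) := by
    rw [c1, ← aux_cls_mul hR hQQ]
  refine ⟨?_, ?_, ?_⟩
  · rw [c1, aux_m1]
  · rw [c1, ← aux_cls_mul hR hQQ, ← aux_cls_mul (hR.mul hQQ) hR, aux_m2]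
  · rw [eq_mul_inv_iff_mul_eq, c2, ← aux_cls_mul hE hPP, c3, sq,
      ← aux_cls_mul hRQQ hRQQ, ← aux_cls_mul hPP (hRQQ.mul hRQQ), aux_m3]


end
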